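/- Let φ ∈ L_{2S} and let p, q be processes with p ⊨ φ and q ⊨ φ. Then the following are equivalent: (1) p and q have a maximal lower bound g with respect to ≲_{2S} and g ⊨ φ; (2) there is a process r such that r ⊨ φ, r ≲_{2S} p, and r ≲_{2S} q. -/
import Mathlib


/-- Finite, loop-free CCS processes over the action set `Act`:
`p ::= 0 | a.p | p + p`. -/
inductive Proc (Act : Type) : Type
  | nil : Proc Act
  | pre : Act → Proc Act → Proc Act
  | plus : Proc Act → Proc Act → Proc Act

/-- The transition relation: `a.p —a→ p`, and `p₁ + p₂ —a→ p'` iff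
`p₁ —a→ p'` or `p₂ —a→ p'`. -/
inductive Step {Act : Type} : Proc Act → Act → Proc Act → Prop
  | pre (a : Act) (p : Proc Act) : Step (Proc.pre a p) a p
  | plusL : ∀ {p₁ p₂ p' : Proc Act} {a : Act},
      Step p₁ a p' → Step (Proc.plus p₁ p₂) a p'
  | plusR : ∀ {p₁ p₂ p' : Proc Act} {a : Act},
      Step p₂ a p' → Step (Proc.plus p₁ p₂) a p'

/-- HML formulas in negation normal form:
`φ ::= tt | ff | φ∧φ | φ∨φ | ⟨a⟩φ | [a]φ`. -/
inductive HML (Act : Type) : Type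
  | tt : HML Act
  | ff : HML Act
  | conj : HML Act → HML Act → HML Act
  | disj : HML Act → HML Act → HML Act
  | dia : Act → HML Act → HML Act
  | box : Act → HML Act → HML Act

/-- The satisfaction relation `p ⊨ φ`. -/
def Sat {Act : Type} : Proc Act → HML Act → Prop
  | _, HML.tt => True
  | _, HML.ff => False
  | p, HML.conj φ ψ => Sat p φ ∧ Sat p ψ
  | p, HML.disj φ ψ => Sat p φ ∨ Sat p ψ
  | p, HML.dia a φ => ∃ p', Step p a p' ∧ Sat p' φ
  | p, HML.box a φ => ∀ p', Step p a p' → Sat p' φ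

/-- `φ` entails `ψ` iff every process satisfying `φ` satisfies `ψ`. -/
def Entails {Act : Type} (φ ψ : HML Act) : Prop :=
  ∀ p : Proc Act, Sat p φ → Sat p ψ

/-- `R` is a simulation relation. -/
def IsSimulation {Act : Type} (R : Proc Act → Proc Act → Prop) : Prop :=
  ∀ p q, R p q → ∀ a p', Step p a p' → ∃ q', Step q a q' ∧ R p' q'

/-- The simulation preorder `≲_S`: the largest simulation. -/
def Sim {Act : Type} (p q : Proc Act) : Prop :=
  ∃ R, IsSimulation R ∧ R p q

/-- The set `I(p)` of initial actions of a process. -/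
def initials {Act : Type} (p : Proc Act) : Set Act :=
  {a | ∃ p', Step p a p'}

/-- Diamond-free HML formulas. -/
def DiaFree {Act : Type} : HML Act → Prop
  | HML.tt => True
  | HML.ff => True
  | HML.conj φ ψ => DiaFree φ ∧ DiaFree ψ
  | HML.disj φ ψ => DiaFree φ ∧ DiaFree ψ
  | HML.dia _ _ => False
  | HML.box _ φ => DiaFree φ

/-- The fragment `L_{2S}`: HML formulas in which no diamond modality occurs
within the scope of a box modality. -/
inductive InL2S {Act : Type} : HML Act → Prop
  | tt : InL2S HML.tt
  | ff : InL2S HML.ff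
  | conj : ∀ {φ ψ : HML Act}, InL2S φ → InL2S ψ → InL2S (HML.conj φ ψ)
  | disj : ∀ {φ ψ : HML Act}, InL2S φ → InL2S ψ → InL2S (HML.disj φ ψ)
  | dia : ∀ {a : Act} {φ : HML Act}, InL2S φ → InL2S (HML.dia a φ)
  | box : ∀ {a : Act} {φ : HML Act}, DiaFree φ → InL2S (HML.box a φ)

/-- `R` is a 2-nested simulation. -/
def Is2Sim {Act : Type} (R : Proc Act → Proc Act → Prop) : Prop :=
  ∀ p q, R p q →
    (∀ a p', Step p a p' → ∃ q', Step q a q' ∧ R p' q') ∧ Sim q p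

/-- The 2-nested simulation preorder `≲_{2S}`: the largest 2-nested simulation. -/
def Sim2 {Act : Type} (p q : Proc Act) : Prop :=
  ∃ R, Is2Sim R ∧ R p q

/-- `g` is a maximal lower bound of `p` and `q` w.r.t. the preorder `r`. -/
def MaxLowerBound {Act : Type} (r : Proc Act → Proc Act → Prop) (g p q : Proc Act) : Prop :=
  r g p ∧ r g q ∧ ∀ g' : Proc Act, r g' p → r g' q → r g' g


namespace MLBAux

variable {Act : Type}

/-! ### Basic simulation lemmas -/

theorem sim_step {p q : Proc Act} (h : Sim p q) {a : Act} {p' : Proc Act}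
    (hs : Step p a p') : ∃ q', Step q a q' ∧ Sim p' q' := by
  obtain ⟨R, hR, hpq⟩ := h
  obtain ⟨q', hq', hR'⟩ := hR p q hpq a p' hs
  exact ⟨q', hq', R, hR, hR'⟩

theorem sim_intro {p q : Proc Act}
    (h : ∀ a p', Step p a p' → ∃ q', Step q a q' ∧ Sim p' q') : Sim p q := by
  refine ⟨fun x y => Sim x y ∨ (x = p ∧ y = q), ?_, Or.inr ⟨rfl, rfl⟩⟩
  rintro x y (hxy | ⟨rfl, rfl⟩) a x' hx'
  · obtain ⟨y', h1, h2⟩ := sim_step hxy hx'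
    exact ⟨y', h1, Or.inl h2⟩
  · obtain ⟨y', h1, h2⟩ := h a x' hx'
    exact ⟨y', h1, Or.inl h2⟩

theorem sim_refl (p : Proc Act) : Sim p p :=
  ⟨Eq, by rintro x y rfl a x' hx'; exact ⟨x', hx', rfl⟩, rfl⟩

theorem sim_trans {p q r : Proc Act} (h1 : Sim p q) (h2 : Sim q r) : Sim p r := by
  refine ⟨fun x z => ∃ y, Sim x y ∧ Sim y z, ?_, q, h1, h2⟩
  rintro x z ⟨y, hxy, hyz⟩ a x' hx'
  obtain ⟨y', hy', h1'⟩ := sim_step hxy hx'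
  obtain ⟨z', hz', h2'⟩ := sim_step hyz hy'
  exact ⟨z', hz', y', h1', h2'⟩

theorem sim2_step {p q : Proc Act} (h : Sim2 p q) {a : Act} {p' : Proc Act}
    (hs : Step p a p') : ∃ q', Step q a q' ∧ Sim2 p' q' := by
  obtain ⟨R, hR, hpq⟩ := h
  obtain ⟨q', hq', hR'⟩ := (hR p q hpq).1 a p' hs
  exact ⟨q', hq', R, hR, hR'⟩

theorem sim2_sim {p q : Proc Act} (h : Sim2 p q) : Sim q p := by
  obtain ⟨R, hR, hpq⟩ := h
  exact (hR p q hpq).2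

theorem sim2_to_sim {p q : Proc Act} (h : Sim2 p q) : Sim p q :=
  ⟨Sim2, fun x y hxy a x' hx' => sim2_step hxy hx', h⟩

theorem sim2_intro {p q : Proc Act}
    (h1 : ∀ a p', Step p a p' → ∃ q', Step q a q' ∧ Sim2 p' q')
    (h2 : Sim q p) : Sim2 p q := by
  refine ⟨fun x y => Sim2 x y ∨ (x = p ∧ y = q), ?_, Or.inr ⟨rfl, rfl⟩⟩
  rintro x y (hxy | ⟨rfl, rfl⟩)
  · refine ⟨fun a x' hx' => ?_, sim2_sim hxy⟩
    obtain ⟨y', h1', h2'⟩ := sim2_step hxy hx'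
    exact ⟨y', h1', Or.inl h2'⟩
  · refine ⟨fun a x' hx' => ?_, h2⟩
    obtain ⟨y', h1', h2'⟩ := h1 a x' hx'
    exact ⟨y', h1', Or.inl h2'⟩

theorem sim2_trans {p q r : Proc Act} (h1 : Sim2 p q) (h2 : Sim2 q r) : Sim2 p r := by
  refine ⟨fun x z => ∃ y, Sim2 x y ∧ Sim2 y z, ?_, q, h1, h2⟩
  rintro x z ⟨y, hxy, hyz⟩
  refine ⟨fun a x' hx' => ?_, sim_trans (sim2_sim hyz) (sim2_sim hxy)⟩
  obtain ⟨y', hy', h1'⟩ := sim2_step hxy hx'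
  obtain ⟨z', hz', h2'⟩ := sim2_step hyz hy'
  exact ⟨z', hz', y', h1', h2'⟩

/-! ### Preservation lemmas -/

theorem diaFree_down {χ : HML Act} (hχ : DiaFree χ) :
    ∀ {s r : Proc Act}, Sim s r → Sat r χ → Sat s χ := by
  induction χ with
  | tt => intro s r _ _; trivial
  | ff => intro s r _ h; exact h
  | conj φ ψ ih1 ih2 =>
    rintro s r hsr ⟨h1, h2⟩
    exact ⟨ih1 hχ.1 hsr h1, ih2 hχ.2 hsr h2⟩
  | disj φ ψ ih1 ih2 =>
    rintro s r hsr (h1 | h2)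
    · exact Or.inl (ih1 hχ.1 hsr h1)
    · exact Or.inr (ih2 hχ.2 hsr h2)
  | dia a φ ih => exact absurd hχ (fun h => h)
  | box a φ ih =>
    intro s r hsr hr s' hs'
    obtain ⟨r', hr', hsim⟩ := sim_step hsr hs'
    exact ih hχ hsim (hr r' hr')

theorem l2s_up {φ : HML Act} (h : InL2S φ) :
    ∀ {r s : Proc Act}, Sim2 r s → Sat r φ → Sat s φ := by
  induction h with
  | tt => intro r s _ _; trivial
  | ff => intro r s _ h; exact h
  | conj _ _ ih1 ih2 =>
    rintro r s hrs ⟨h1, h2⟩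
    exact ⟨ih1 hrs h1, ih2 hrs h2⟩
  | disj _ _ ih1 ih2 =>
    rintro r s hrs (h1 | h2)
    · exact Or.inl (ih1 hrs h1)
    · exact Or.inr (ih2 hrs h2)
  | dia _ ih =>
    rintro r s hrs ⟨r', hr', hsat⟩
    obtain ⟨s', hs', h2⟩ := sim2_step hrs hr'
    exact ⟨s', hs', ih h2 hsat⟩
  | box hdf =>
    intro r s hrs hr s' hs'
    obtain ⟨r', hr', hsim⟩ := sim_step (sim2_sim hrs) hs'
    exact diaFree_down hdf hsim (hr r' hr')

/-! ### Derivatives, sums, depth -/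

def derivList : Proc Act → List (Act × Proc Act)
  | .nil => []
  | .pre a p => [(a, p)]
  | .plus p q => derivList p ++ derivList q

theorem step_iff_mem {p : Proc Act} {a : Act} {p' : Proc Act} :
    Step p a p' ↔ (a, p') ∈ derivList p := by
  constructor
  · intro h
    induction h with
    | pre a p => simp [derivList]
    | plusL _ ih => simp [derivList, ih]
    | plusR _ ih => simp [derivList, ih]
  · intro h
    induction p with
    | nil => simp [derivList] at h
    | pre b q =>
      simp [derivList] at h
      obtain ⟨rfl, rfl⟩ := h
      exact Step.pre _ _
    | plus p1 p2 ih1 ih2 =>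
      simp [derivList] at h
      rcases h with h | h
      · exact Step.plusL (ih1 h)
      · exact Step.plusR (ih2 h)

def sumList : List (Proc Act) → Proc Act
  | [] => .nil
  | x :: l => .plus x (sumList l)

theorem step_sumList {l : List (Proc Act)} {a : Act} {p' : Proc Act} :
    Step (sumList l) a p' ↔ ∃ r ∈ l, Step r a p' := by
  induction l with
  | nil =>
    simp only [sumList, List.not_mem_nil]
    constructor
    · intro h; cases h
    · rintro ⟨r, h, _⟩; exact absurd h (by simp)
  | cons x l ih =>
    constructor
    · intro h
      cases h with
      | plusL h => exact ⟨x, by simp, h⟩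
      | plusR h =>
        obtain ⟨r, hr, hs⟩ := ih.mp h
        exact ⟨r, by simp [hr], hs⟩
    · rintro ⟨r, hr, hs⟩
      rcases List.mem_cons.mp hr with rfl | hr
      · exact Step.plusL hs
      · exact Step.plusR (ih.mpr ⟨r, hr, hs⟩)

def depth : Proc Act → ℕ
  | .nil => 0
  | .pre _ p => depth p + 1
  | .plus p q => max (depth p) (depth q)

theorem depth_step {p : Proc Act} {a : Act} {p' : Proc Act} (h : Step p a p') :
    depth p' < depth p := by
  induction h with
  | pre a p => simp [depth]
  | plusL _ ih => exact lt_of_lt_of_le ih (le_max_left _ _)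
  | plusR _ ih => exact lt_of_lt_of_le ih (le_max_right _ _)

/-! ### The maximal lower bound construction -/

def CLB (p q : Proc Act) : Prop := ∃ r, Sim2 r p ∧ Sim2 r q

open Classical in
noncomputable def G : ℕ → Proc Act → Proc Act → Proc Act
  | 0, _, _ => .nil
  | n + 1, p, q => sumList <|
      ((derivList p).product (derivList q)).filterMap fun x =>
        if x.1.1 = x.2.1 ∧ CLB x.1.2 x.2.2 then some (.pre x.1.1 (G n x.1.2 x.2.2))
        else none

theorem step_G {n : ℕ} {p q : Proc Act} {c : Act} {g' : Proc Act} :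
    Step (G (n + 1) p q) c g' ↔
      ∃ p' q', Step p c p' ∧ Step q c q' ∧ CLB p' q' ∧ g' = G n p' q' := by
  classical
  rw [G, step_sumList]
  constructor
  · rintro ⟨r, hr, hs⟩
    obtain ⟨x, hx, hxr⟩ := List.mem_filterMap.mp hr
    split at hxr
    · rename_i hcond
      obtain ⟨⟨a1, p1⟩, a2, q1⟩ := x
      obtain ⟨hcEq, hcClb⟩ := hcond
      cases hxr
      cases hs
      obtain ⟨h1, h2⟩ := List.pair_mem_product.mp hx
      dsimp only at hcEq hcClb ⊢
      subst hcEq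
      exact ⟨p1, q1, step_iff_mem.mpr h1, step_iff_mem.mpr h2, hcClb, rfl⟩
    · cases hxr
  · rintro ⟨p', q', hp', hq', hclb, rfl⟩
    refine ⟨.pre c (G n p' q'), List.mem_filterMap.mpr
      ⟨((c, p'), (c, q')), List.pair_mem_product.mpr
        ⟨step_iff_mem.mp hp', step_iff_mem.mp hq'⟩, ?_⟩, Step.pre _ _⟩
    rw [if_pos ⟨rfl, hclb⟩]

theorem G_mlb : ∀ n : ℕ, ∀ p q : Proc Act, depth p ≤ n → CLB p q →
    MaxLowerBound Sim2 (G n p q) p q := by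
  intro n
  induction n with
  | zero =>
    intro p q hd hclb0
    have hnostep : ∀ a (p' : Proc Act), Step p a p' → False := by
      intro a p' h
      exact absurd (lt_of_lt_of_le (depth_step h) hd) (by simp)
    have hnil : ∀ a (x : Proc Act), Step (G 0 p q) a x → False := by
      intro a x h; rw [G] at h; cases h
    refine ⟨?_, ?_, ?_⟩
    · exact sim2_intro (fun a x h => absurd h (fun h => hnil a x h))
        (sim_intro fun a p' h => absurd h (fun h => hnostep a p' h))
    · -- q has no steps either: its simulator r has steps matched in p, which has none
      obtain ⟨r, hrp, hrq⟩ := hclb0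
      refine sim2_intro (fun a x h => absurd h (fun h => hnil a x h))
        (sim_intro fun a q' h => ?_)
      obtain ⟨r', hr', _⟩ := sim_step (sim2_sim hrq) h
      obtain ⟨p', hp', _⟩ := sim2_step hrp hr'
      exact absurd hp' (fun h => hnostep a p' h)
    · intro g' hgp _
      refine sim2_intro (fun a g'' h => ?_)
        (sim_intro fun a x h => absurd h (fun h => hnil a x h))
      obtain ⟨p', hp', _⟩ := sim2_step hgp h
      exact absurd hp' (fun h => hnostep a p' h)
  | succ n ih =>
    intro p q hd hclb
    obtain ⟨r, hrp, hrq⟩ := hclb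
    have hdp' : ∀ {a : Act} {p' : Proc Act}, Step p a p' → depth p' ≤ n :=
      fun h => Nat.lt_succ_iff.mp (lt_of_lt_of_le (depth_step h) hd)
    -- common pattern: from a step of r, get the matched pair and facts
    refine ⟨?_, ?_, ?_⟩
    · -- Sim2 (G (n+1) p q) p
      refine sim2_intro (fun c g₀ h => ?_) (sim_intro fun a p'' h => ?_)
      · obtain ⟨p', q', hp', hq', hclb', rfl⟩ := step_G.mp h
        exact ⟨p', hp', ((ih p' q' (hdp' hp') hclb').1)⟩
      · obtain ⟨r', hr', hpr'⟩ := sim_step (sim2_sim hrp) h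
        obtain ⟨p₁, hp₁, hrp₁⟩ := sim2_step hrp hr'
        obtain ⟨q₁, hq₁, hrq₁⟩ := sim2_step hrq hr'
        have hclb₁ : CLB p₁ q₁ := ⟨r', hrp₁, hrq₁⟩
        have hmlb := ih p₁ q₁ (hdp' hp₁) hclb₁
        refine ⟨G n p₁ q₁, step_G.mpr ⟨p₁, q₁, hp₁, hq₁, hclb₁, rfl⟩, ?_⟩
        exact sim_trans hpr' (sim2_to_sim (hmlb.2.2 r' hrp₁ hrq₁))
    · -- Sim2 (G (n+1) p q) q
      refine sim2_intro (fun c g₀ h => ?_) (sim_intro fun a q'' h => ?_)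
      · obtain ⟨p', q', hp', hq', hclb', rfl⟩ := step_G.mp h
        exact ⟨q', hq', ((ih p' q' (hdp' hp') hclb').2.1)⟩
      · obtain ⟨r', hr', hqr'⟩ := sim_step (sim2_sim hrq) h
        obtain ⟨p₁, hp₁, hrp₁⟩ := sim2_step hrp hr'
        obtain ⟨q₁, hq₁, hrq₁⟩ := sim2_step hrq hr'
        have hclb₁ : CLB p₁ q₁ := ⟨r', hrp₁, hrq₁⟩
        have hmlb := ih p₁ q₁ (hdp' hp₁) hclb₁
        refine ⟨G n p₁ q₁, step_G.mpr ⟨p₁, q₁, hp₁, hq₁, hclb₁, rfl⟩, ?_⟩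
        exact sim_trans hqr' (sim2_to_sim (hmlb.2.2 r' hrp₁ hrq₁))
    · -- maximality
      intro g' hgp hgq
      refine sim2_intro (fun a g'' h => ?_) (sim_intro fun c g₀ h => ?_)
      · obtain ⟨p₁, hp₁, hgp₁⟩ := sim2_step hgp h
        obtain ⟨q₁, hq₁, hgq₁⟩ := sim2_step hgq h
        have hclb₁ : CLB p₁ q₁ := ⟨g'', hgp₁, hgq₁⟩
        have hmlb := ih p₁ q₁ (hdp' hp₁) hclb₁
        exact ⟨G n p₁ q₁, step_G.mpr ⟨p₁, q₁, hp₁, hq₁, hclb₁, rfl⟩,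
          hmlb.2.2 g'' hgp₁ hgq₁⟩
      · obtain ⟨p', q', hp', hq', hclb', rfl⟩ := step_G.mp h
        obtain ⟨h₀, hh₀, hph⟩ := sim_step (sim2_sim hgp) hp'
        have hmlb := ih p' q' (hdp' hp') hclb'
        exact ⟨h₀, hh₀, sim_trans (sim2_to_sim hmlb.1) hph⟩

end MLBAux

/-- Let `φ ∈ L_{2S}` and `p ⊨ φ`, `q ⊨ φ`. Then the following are equivalent:
(1) `p` and `q` have a maximal lower bound `g` w.r.t. `≲_{2S}` and `g ⊨ φ`;
(2) there is a process `r` with `r ⊨ φ`, `r ≲_{2S} p` and `r ≲_{2S} q`. -/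
theorem mlb_sat_iff_common_lower_bound {Act : Type} [Fintype Act] [Nonempty Act]
    (φ : HML Act) (h : InL2S φ) (p q : Proc Act) (hp : Sat p φ) (hq : Sat q φ) :
    (∃ g : Proc Act, MaxLowerBound Sim2 g p q ∧ Sat g φ) ↔
      (∃ r : Proc Act, Sat r φ ∧ Sim2 r p ∧ Sim2 r q) := by
  constructor
  · rintro ⟨g, ⟨hgp, hgq, _⟩, hsat⟩
    exact ⟨g, hsat, hgp, hgq⟩
  · rintro ⟨r, hsat, hrp, hrq⟩
    have hmlb := MLBAux.G_mlb (MLBAux.depth p) p q le_rfl ⟨r, hrp, hrq⟩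
    refine ⟨_, hmlb, ?_⟩
    exact MLBAux.l2s_up h (hmlb.2.2 r hrp hrq) hsat
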